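/- Let (a_k)_{k≥1} be a sequence of nonnegative real numbers with a_1 ≤ 1 and a_k ≤ 1 − a_1² for all k ≥ 2. Then for every r ∈ (0,1) satisfying 3(1−r)·log(1/(1−r)) ≥ 2r, one has Σ_{k=0}^∞ r^{k+1} · (1/(k+1)) · Σ_{n=0}^k a_{n+1} ≤ log(1/(1−r)). -/

import Mathlib

open Real Finset

/-- Bohr-type inequality for the Cesàro operator applied to functions
vanishing at the origin (β → 1 case of the remark following Theorem 2.1). -/
theorem cesaro_bohr_normalized (a : ℕ → ℝ) (ha : ∀ k, 0 ≤ a k) (ha1 : a 1 ≤ 1)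
    (hak : ∀ k, 2 ≤ k → a k ≤ 1 - (a 1) ^ 2)
    (r : ℝ) (hr : r ∈ Set.Ioo (0 : ℝ) 1)
    (hR : 2 * r ≤ 3 * (1 - r) * Real.log (1 / (1 - r))) :
    ∑' k : ℕ, r ^ (k + 1) * ((1 / (k + 1 : ℝ)) *
        ∑ n ∈ Finset.range (k + 1), a (n + 1))
      ≤ Real.log (1 / (1 - r)) := by
  obtain ⟨hr0, hr1⟩ := hr
  have hsub : (0:ℝ) < 1 - r := by linarith
  set A := a 1 with hA
  have hA0 : 0 ≤ A := ha 1
  set L := Real.log (1 / (1 - r)) with hL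
  have hLval : L = -Real.log (1 - r) := by
    rw [hL, one_div, Real.log_inv]
  -- log series
  have habs : |r| < 1 := by rw [abs_of_pos hr0]; exact hr1
  have hlog : HasSum (fun k : ℕ => r ^ (k + 1) * (1 / (k + 1 : ℝ))) L := by
    rw [hLval]
    have := hasSum_pow_div_log_of_abs_lt_one habs
    convert this using 2 with k
    push_cast
    ring
  -- geometric series
  have hgeo : HasSum (fun k : ℕ => r ^ (k + 1)) (r / (1 - r)) := by
    simpa [pow_succ', div_eq_mul_inv] using
      (hasSum_geometric_of_lt_one hr0.le hr1).mul_left r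
  -- the combined majorant series
  have hg : HasSum (fun k : ℕ => r ^ (k + 1) *
      ((1 / (k + 1 : ℝ)) * A + ((k : ℝ) / (k + 1 : ℝ)) * (1 - A ^ 2)))
      (A * L + (1 - A ^ 2) * (r / (1 - r) - L)) := by
    have h1 := hlog.mul_left A
    have h2 := (hgeo.sub hlog).mul_left (1 - A ^ 2)
    have h3 := h1.add h2
    convert h3 using 2 with k
    · rfl
    have hk1 : ((k:ℝ) + 1) ≠ 0 := by positivity
    field_simp
    ring
  -- pointwise bounds
  have hf_nonneg : ∀ k : ℕ, 0 ≤ r ^ (k + 1) * ((1 / (k + 1 : ℝ)) *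
      ∑ n ∈ Finset.range (k + 1), a (n + 1)) := by
    intro k
    have : 0 ≤ ∑ n ∈ Finset.range (k + 1), a (n + 1) :=
      Finset.sum_nonneg fun n _ => ha _
    positivity
  have hfg : ∀ k : ℕ, r ^ (k + 1) * ((1 / (k + 1 : ℝ)) *
      ∑ n ∈ Finset.range (k + 1), a (n + 1)) ≤ r ^ (k + 1) *
      ((1 / (k + 1 : ℝ)) * A + ((k : ℝ) / (k + 1 : ℝ)) * (1 - A ^ 2)) := by
    intro k
    have hS : ∑ n ∈ Finset.range (k + 1), a (n + 1) ≤ A + (k : ℝ) * (1 - A ^ 2) := by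
      rw [Finset.range_eq_Ico, ← Finset.sum_Ico_consecutive _ (Nat.zero_le 1) (by omega : 1 ≤ k + 1)]
      have h0 : ∑ n ∈ Finset.Ico 0 1, a (n + 1) = A := by simp [hA]
      have h1 : ∑ n ∈ Finset.Ico 1 (k + 1), a (n + 1) ≤ (k : ℝ) * (1 - A ^ 2) := by
        calc ∑ n ∈ Finset.Ico 1 (k + 1), a (n + 1)
            ≤ ∑ _n ∈ Finset.Ico 1 (k + 1), (1 - A ^ 2) := by
              apply Finset.sum_le_sum
              intro n hn
              exact hak (n + 1) (by simp at hn; omega)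
          _ = (k : ℝ) * (1 - A ^ 2) := by
              rw [Finset.sum_const, Nat.card_Ico]; simp
      linarith [h0, h1]
    have hk1 : (0:ℝ) < (k:ℝ) + 1 := by positivity
    have hrp : (0:ℝ) ≤ r ^ (k + 1) := by positivity
    have : (1 / (k + 1 : ℝ)) * ∑ n ∈ Finset.range (k + 1), a (n + 1)
        ≤ (1 / (k + 1 : ℝ)) * A + ((k : ℝ) / (k + 1 : ℝ)) * (1 - A ^ 2) := by
      calc (1 / (k + 1 : ℝ)) * ∑ n ∈ Finset.range (k + 1), a (n + 1)
          = (∑ n ∈ Finset.range (k + 1), a (n + 1)) / ((k : ℝ) + 1) := by ring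
        _ ≤ (A + (k : ℝ) * (1 - A ^ 2)) / ((k : ℝ) + 1) := by gcongr
        _ = (1 / (k + 1 : ℝ)) * A + ((k : ℝ) / (k + 1 : ℝ)) * (1 - A ^ 2) := by
            field_simp
    exact mul_le_mul_of_nonneg_left this hrp
  have hsumm : Summable (fun k : ℕ => r ^ (k + 1) * ((1 / (k + 1 : ℝ)) *
      ∑ n ∈ Finset.range (k + 1), a (n + 1))) :=
    Summable.of_nonneg_of_le hf_nonneg hfg hg.summable
  have hle : ∑' k : ℕ, r ^ (k + 1) * ((1 / (k + 1 : ℝ)) *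
      ∑ n ∈ Finset.range (k + 1), a (n + 1))
      ≤ A * L + (1 - A ^ 2) * (r / (1 - r) - L) :=
    hg.tsum_eq ▸ Summable.tsum_le_tsum hfg hsumm hg.summable
  refine hle.trans ?_
  -- final algebra
  have hx0 : 0 ≤ r / (1 - r) - L := by
    have := hasSum_le (fun k => by
      have h1 : (0:ℝ) < (k:ℝ) + 1 := by positivity
      have h2 : (0:ℝ) ≤ r ^ (k + 1) := by positivity
      have : (1 / ((k:ℝ) + 1)) ≤ 1 := by
        rw [div_le_one h1]; linarith [Nat.cast_nonneg (α := ℝ) k]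
      calc r ^ (k + 1) * (1 / ((k:ℝ) + 1)) ≤ r ^ (k + 1) * 1 :=
            mul_le_mul_of_nonneg_left this h2
        _ = r ^ (k + 1) := mul_one _) hlog hgeo
    linarith
  have hL0 : 0 ≤ L := by
    rw [hLval]
    have : Real.log (1 - r) ≤ 0 := Real.log_nonpos (by linarith) (by linarith)
    linarith
  have h2x : 2 * (r / (1 - r) - L) ≤ L := by
    have : r / (1 - r) ≤ 3 / 2 * L := by rw [div_le_iff₀ hsub]; linarith
    linarith
  nlinarith [mul_nonneg (mul_nonneg (sub_nonneg.mpr ha1) (sub_nonneg.mpr ha1)) hx0]
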